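/- Let A, B be rings and M an (A,B)-bimodule. A triple (X, Y, φ), where φ : M⊗_B Y → X is an A-module map, is a projective object of Rep(A,M,B) (equivalently, of left modules over the triangular matrix ring [[A,M],[0,B]]) if and only if Y is a projective B-module, φ is injective, and Coker(φ) is a projective A-module. -/

import Mathlib

set_option linter.unusedSectionVars false

open MulOpposite

universe u

section RepT

variable (A B M : Type u) [Ring A] [Ring B]
  [AddCommGroup M] [Module A M] [Module Bᵐᵒᵖ M] [SMulCommClass A Bᵐᵒᵖ M]

/-- Data exhibiting an `A`-module `T` as the tensor product `M ⊗_B Y` of the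
`(A,B)`-bimodule `M` with a left `B`-module `Y`, i.e. a `B`-balanced, `A`-compatible
biadditive map `τ : M × Y → T` which is universal among such maps. -/
structure TensorData (Y : Type u) [AddCommGroup Y] [Module B Y] where
  T : Type u
  [addT : AddCommGroup T]
  [modT : Module A T]
  τ : M → Y → T
  add_left : ∀ m m' y, τ (m + m') y = τ m y + τ m' y
  add_right : ∀ m y y', τ m (y + y') = τ m y + τ m y'
  balanced : ∀ (b : B) m y, τ (op b • m) y = τ m (b • y)
  smul_left : ∀ (a : A) m y, τ (a • m) y = a • τ m y
  universal : ∀ (Z : Type u) [AddCommGroup Z] [Module A Z] (β : M → Y → Z),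
    (∀ m m' y, β (m + m') y = β m y + β m' y) →
    (∀ m y y', β m (y + y') = β m y + β m y') →
    (∀ (b : B) m y, β (op b • m) y = β m (b • y)) →
    (∀ (a : A) m y, β (a • m) y = a • β m y) →
    ∃! h : T →ₗ[A] Z, ∀ m y, h (τ m y) = β m y

attribute [instance] TensorData.addT TensorData.modT

/-- An object of the category `Rep(A,M,B)` (equivalent to the category of left modules
over the triangular matrix ring `[[A,M],[0,B]]`): a triple `(X, Y, φ)` where `X` is a
left `A`-module, `Y` a left `B`-module and `φ : M ⊗_B Y → X` is `A`-linear; the tensor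
product `M ⊗_B Y` is recorded via its universal property. -/
structure RepObj where
  X : Type u
  [addX : AddCommGroup X]
  [modX : Module A X]
  Y : Type u
  [addY : AddCommGroup Y]
  [modY : Module B Y]
  td : TensorData A B M Y
  φ : td.T →ₗ[A] X

attribute [instance] RepObj.addX RepObj.modX RepObj.addY RepObj.modY

variable {A B M}

/-- A morphism of `Rep(A,M,B)`: a pair `(f, g)` with `f ∘ φ₁ = φ₂ ∘ (1_M ⊗ g)`. -/
structure RepHom (T₁ T₂ : RepObj A B M) where
  f : T₁.X →ₗ[A] T₂.X
  g : T₁.Y →ₗ[B] T₂.Y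
  comm : ∀ m y, f (T₁.φ (T₁.td.τ m y)) = T₂.φ (T₂.td.τ m (g y))

/-- A short exact sequence in `Rep(A,M,B)` (exactness is componentwise). -/
structure RepSES (T₁ T₂ T₃ : RepObj A B M) where
  i : RepHom T₁ T₂
  p : RepHom T₂ T₃
  inj_f : Function.Injective i.f
  inj_g : Function.Injective i.g
  surj_f : Function.Surjective p.f
  surj_g : Function.Surjective p.g
  exact_f : LinearMap.range i.f = LinearMap.ker p.f
  exact_g : LinearMap.range i.g = LinearMap.ker p.g

/-- `P` is a projective object of `Rep(A,M,B)`: every morphism from `P` lifts along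
every epimorphism (epimorphisms are the componentwise surjective morphisms). -/
def RepObj.IsProjObj (P : RepObj A B M) : Prop :=
  ∀ (T₁ T₂ : RepObj A B M) (u : RepHom T₁ T₂),
    Function.Surjective u.f → Function.Surjective u.g →
    ∀ h : RepHom P T₂, ∃ h' : RepHom P T₁,
      (∀ x, u.f (h'.f x) = h.f x) ∧ (∀ y, u.g (h'.g y) = h.g y)

end RepT

variable {A B M : Type u} [Ring A] [Ring B]
  [AddCommGroup M] [Module A M] [Module Bᵐᵒᵖ M] [SMulCommClass A Bᵐᵒᵖ M]

namespace Stmt7Aux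

/-- Two `A`-linear maps out of a tensor product agreeing on pure tensors are equal. -/
theorem td_ext {Y : Type u} [AddCommGroup Y] [Module B Y] (td : TensorData A B M Y)
    {Z : Type u} [AddCommGroup Z] [Module A Z] (h₁ h₂ : td.T →ₗ[A] Z)
    (H : ∀ m y, h₁ (td.τ m y) = h₂ (td.τ m y)) : h₁ = h₂ := by
  obtain ⟨h, -, huniq⟩ := td.universal Z (fun m y => h₁ (td.τ m y))
    (fun m m' y => by rw [td.add_left, map_add])
    (fun m y y' => by rw [td.add_right, map_add])
    (fun b m y => by rw [td.balanced])
    (fun a m y => by rw [td.smul_left, map_smul])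
  rw [huniq h₁ (fun m y => rfl), huniq h₂ (fun m y => (H m y).symm)]

/-- The map `1_M ⊗ g` between tensor products induced by a `B`-linear map `g`. -/
noncomputable def tmap {Y Y' : Type u} [AddCommGroup Y] [Module B Y]
    [AddCommGroup Y'] [Module B Y'] (td : TensorData A B M Y) (td' : TensorData A B M Y')
    (g : Y →ₗ[B] Y') : td.T →ₗ[A] td'.T :=
  (td.universal td'.T (fun m y => td'.τ m (g y))
    (fun m m' y => td'.add_left m m' (g y))
    (fun m y y' => by rw [map_add, td'.add_right])
    (fun b m y => by rw [td'.balanced, map_smul])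
    (fun a m y => td'.smul_left a m (g y))).exists.choose

theorem tmap_τ {Y Y' : Type u} [AddCommGroup Y] [Module B Y]
    [AddCommGroup Y'] [Module B Y'] (td : TensorData A B M Y) (td' : TensorData A B M Y')
    (g : Y →ₗ[B] Y') (m : M) (y : Y) :
    tmap td td' g (td.τ m y) = td'.τ m (g y) :=
  (td.universal td'.T (fun m y => td'.τ m (g y))
    (fun m m' y => td'.add_left m m' (g y))
    (fun m y y' => by rw [map_add, td'.add_right])
    (fun b m y => by rw [td'.balanced, map_smul])
    (fun a m y => td'.smul_left a m (g y))).exists.choose_spec m y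

/-- Tensor data for the free module `ι →₀ B`: the tensor product is `ι →₀ M`. -/
noncomputable def tdFinsupp (ι : Type u) : TensorData A B M (ι →₀ B) where
  T := ι →₀ M
  τ m f := f.mapRange (fun b => op b • m) (by simp)
  add_left m m' f := by
    ext i; simp [Finsupp.mapRange_apply, smul_add]
  add_right m f f' := by
    ext i; simp [Finsupp.mapRange_apply, op_add, add_smul]
  balanced b m f := by
    ext i; simp [Finsupp.mapRange_apply, smul_eq_mul, op_mul, mul_smul]
  smul_left a m f := by
    ext i
    simp only [Finsupp.mapRange_apply, Finsupp.smul_apply]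
    exact (smul_comm a (op (f i)) m).symm
  universal Z _ _ β h1 h2 h3 h4 := by
    have hβ0l : ∀ y, β 0 y = 0 := fun y => by
      have h' := h1 0 0 y
      rw [add_zero] at h'
      exact right_eq_add.mp h'
    let φi : ι → M →ₗ[A] Z := fun i =>
      { toFun := fun m => β m (Finsupp.single i 1)
        map_add' := fun m m' => h1 m m' _
        map_smul' := fun a m => h4 a m _ }
    have hspec : ∀ (m : M) (f : ι →₀ B),
        Finsupp.lsum ℕ φi (f.mapRange (fun b => op b • m) (by simp)) = β m f := by
      intro m f
      rw [Finsupp.lsum_apply]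
      have e1 : ((f.mapRange (fun b => op b • m) (by simp)).sum fun i => ⇑(φi i))
          = f.sum fun i b => β (op b • m) (Finsupp.single i 1) :=
        Finsupp.sum_mapRange_index (fun i => hβ0l _)
      rw [e1]
      have e2 : (f.sum fun i b => β (op b • m) (Finsupp.single i 1))
          = f.sum fun i b => β m (Finsupp.single i b) := by
        apply Finsupp.sum_congr
        intro i _
        rw [h3, Finsupp.smul_single, smul_eq_mul, mul_one]
      rw [e2]
      let Bm : (ι →₀ B) →+ Z := AddMonoidHom.mk' (β m) (h2 m)
      have e3 : (f.sum fun i b => β m (Finsupp.single i b))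
          = f.sum fun i b => Bm (Finsupp.single i b) := rfl
      rw [e3, ← map_finsuppSum, Finsupp.sum_single]
      rfl
    refine ⟨Finsupp.lsum ℕ φi, fun m f => hspec m f, fun h' hh' => ?_⟩
    apply Finsupp.lhom_ext
    intro i m
    have h2' : (Finsupp.single i m : ι →₀ M)
        = (Finsupp.single i (1:B)).mapRange (fun b => op b • m) (by simp) := by
      rw [Finsupp.mapRange_single, op_one, one_smul]
    rw [h2', hh' m (Finsupp.single i 1), hspec m (Finsupp.single i 1)]

end Stmt7Aux

open Stmt7Aux in
/-- Let `A`, `B` be rings and `M` an `(A,B)`-bimodule.  A triple `(X, Y, φ)` with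
`φ : M ⊗_B Y → X` `A`-linear is a projective object of `Rep(A,M,B)` (equivalently, of
left modules over the triangular matrix ring `[[A,M],[0,B]]`) if and only if `Y` is a
projective `B`-module, `φ` is injective and `Coker φ` is a projective `A`-module. -/
theorem stmt7 (P : RepObj A B M) :
    P.IsProjObj ↔
      Module.Projective B P.Y ∧ Function.Injective P.φ ∧
        Module.Projective A (P.X ⧸ LinearMap.range P.φ) := by
  constructor
  · -- the "only if" direction
    intro hproj
    -- the standard projective cover of `P`
    set tdF : TensorData A B M (P.Y →₀ B) := tdFinsupp P.Y with htdF
    let g₀ : (P.Y →₀ B) →ₗ[B] P.Y := Finsupp.linearCombination B id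
    let γg : (P.Y →₀ M) →ₗ[A] P.td.T := tmap tdF P.td g₀
    let tot : (P.X →₀ A) →ₗ[A] P.X := Finsupp.linearCombination A id
    let S : RepObj A B M :=
      { X := (P.Y →₀ M) × (P.X →₀ A), Y := P.Y →₀ B, td := tdF,
        φ := LinearMap.inl A (P.Y →₀ M) (P.X →₀ A) }
    let uf : S.X →ₗ[A] P.X :=
      (P.φ ∘ₗ γg) ∘ₗ LinearMap.fst A (P.Y →₀ M) (P.X →₀ A)
        + tot ∘ₗ LinearMap.snd A (P.Y →₀ M) (P.X →₀ A)
    have huf : ∀ z : (P.Y →₀ M) × (P.X →₀ A), uf z = P.φ (γg z.1) + tot z.2 :=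
      fun z => rfl
    let uS : RepHom S P :=
      { f := uf, g := g₀,
        comm := by
          intro m fy
          show uf (S.td.τ m fy, 0) = P.φ (P.td.τ m (g₀ fy))
          rw [huf]
          simp only [map_zero, add_zero]
          exact congrArg (fun t => P.φ t) (tmap_τ tdF P.td g₀ m fy) }
    have surjf : Function.Surjective uS.f := by
      intro x
      refine ⟨((0 : P.Y →₀ M), Finsupp.single x 1), ?_⟩
      show uf (0, Finsupp.single x 1) = x
      rw [huf]
      simp [tot, Finsupp.linearCombination_single]
    have surjg : Function.Surjective uS.g := by
      intro y
      exact ⟨Finsupp.single y 1, by show g₀ (Finsupp.single y 1) = y; simp [g₀, Finsupp.linearCombination_single]⟩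
    obtain ⟨h', hf, hg⟩ := hproj S P uS surjf surjg
      ⟨LinearMap.id, LinearMap.id, fun m y => rfl⟩
    simp only [LinearMap.id_apply] at hf hg
    -- `h'` splits `uS`
    -- claim A : `h'.f ∘ P.φ = inl ∘ (1 ⊗ h'.g)`
    have claimA : h'.f ∘ₗ P.φ
        = (LinearMap.inl A (P.Y →₀ M) (P.X →₀ A)) ∘ₗ tmap P.td tdF h'.g := by
      apply td_ext P.td
      intro m y
      simp only [LinearMap.comp_apply]
      exact (h'.comm m y).trans
        (congrArg (fun t => (LinearMap.inl A (P.Y →₀ M) (P.X →₀ A)) t)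
          (tmap_τ P.td tdF h'.g m y).symm)
    -- claim B : `(1 ⊗ uS.g) ∘ (1 ⊗ h'.g) = id`
    have claimB : γg ∘ₗ tmap P.td tdF h'.g = LinearMap.id := by
      apply td_ext P.td
      intro m y
      simp only [LinearMap.comp_apply, LinearMap.id_apply]
      exact (congrArg (fun t => γg t) (tmap_τ P.td tdF h'.g m y)).trans
        ((tmap_τ tdF P.td g₀ m (h'.g y)).trans
          (congrArg (fun z => P.td.τ m z) (hg y)))
    refine ⟨?_, ?_, ?_⟩
    · -- Y is projective
      exact Module.Projective.of_split h'.g uS.g (LinearMap.ext hg)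
    · -- φ is injective
      rw [injective_iff_map_eq_zero]
      intro t ht
      have h1 : h'.f (P.φ t) = (tmap P.td tdF h'.g t, 0) :=
        LinearMap.congr_fun claimA t
      rw [ht, map_zero] at h1
      have h2 : tmap P.td tdF h'.g t = 0 := by
        have := congrArg Prod.fst h1
        exact this.symm
      have h3 : γg (tmap P.td tdF h'.g t) = t := LinearMap.congr_fun claimB t
      rw [h2] at h3
      exact h3.symm.trans (map_zero γg)
    · -- the cokernel is projective
      set q : Submodule A P.X := LinearMap.range P.φ with hq
      let j : P.X →ₗ[A] (P.X →₀ A) :=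
        LinearMap.snd A (P.Y →₀ M) (P.X →₀ A) ∘ₗ h'.f
      have hle : q ≤ LinearMap.ker j := by
        rintro _ ⟨t, rfl⟩
        show (LinearMap.snd A (P.Y →₀ M) (P.X →₀ A)) (h'.f (P.φ t)) = 0
        rw [show h'.f (P.φ t) = (tmap P.td tdF h'.g t, 0) from
          LinearMap.congr_fun claimA t]
        rfl
      let jbar : (P.X ⧸ q) →ₗ[A] (P.X →₀ A) := q.liftQ j hle
      let k : (P.X →₀ A) →ₗ[A] (P.X ⧸ q) :=
        q.mkQ ∘ₗ uS.f ∘ₗ LinearMap.inr A (P.Y →₀ M) (P.X →₀ A)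
      refine Module.Projective.of_split jbar k ?_
      apply Submodule.linearMap_qext
      apply LinearMap.ext
      intro x
      simp only [LinearMap.comp_apply, Submodule.mkQ_apply, LinearMap.id_apply]
      have hlift : jbar (Submodule.Quotient.mk x) = j x := by
        exact LinearMap.congr_fun (q.liftQ_mkQ j hle) x
      rw [hlift]
      show q.mkQ (uf (LinearMap.inr A (P.Y →₀ M) (P.X →₀ A) ((h'.f x).2)))
        = Submodule.Quotient.mk x
      rw [huf]
      have hx : P.φ (γg ((h'.f x).1)) + tot ((h'.f x).2) = x := by
        have := hf x
        rw [show uS.f (h'.f x) = uf (h'.f x) from rfl, huf] at this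
        exact this
      have htot : tot ((h'.f x).2) = x - P.φ (γg ((h'.f x).1)) :=
        eq_sub_of_add_eq' hx
      simp only [LinearMap.inr_apply, map_zero, zero_add]
      rw [htot, map_sub, Submodule.mkQ_apply, Submodule.mkQ_apply,
        (Submodule.Quotient.mk_eq_zero q).mpr ⟨γg ((h'.f x).1), rfl⟩, sub_zero]
  · -- the "if" direction
    rintro ⟨hY, hinj, hC⟩ T₁ T₂ u surjf surjg h
    -- lift `h.g` along `u.g`
    obtain ⟨g', hg'⟩ := Module.projective_lifting_property u.g h.g surjg
    -- the induced map `1 ⊗ g'` on tensor products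
    let γ : P.td.T →ₗ[A] T₁.td.T := tmap P.td T₁.td g'
    -- split the projection onto the cokernel
    set q : Submodule A P.X := LinearMap.range P.φ with hq
    obtain ⟨s, hs⟩ := Module.projective_lifting_property q.mkQ
      (LinearMap.id : (P.X ⧸ q) →ₗ[A] (P.X ⧸ q)) q.mkQ_surjective
    -- the retraction `ψ : P.X → P.td.T` of `P.φ`
    let r : P.X →ₗ[A] P.X := LinearMap.id - s ∘ₗ q.mkQ
    have hrmem : ∀ x, r x ∈ q := by
      intro x
      rw [← Submodule.ker_mkQ q, LinearMap.mem_ker]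
      show q.mkQ (x - s (q.mkQ x)) = 0
      have h2 : q.mkQ (s (q.mkQ x)) = q.mkQ x := LinearMap.congr_fun hs (q.mkQ x)
      rw [map_sub, h2, sub_self]
    let e : P.td.T ≃ₗ[A] q := LinearEquiv.ofInjective P.φ hinj
    let ψ : P.X →ₗ[A] P.td.T :=
      e.symm.toLinearMap ∘ₗ LinearMap.codRestrict q r hrmem
    have key1 : ∀ x, P.φ (ψ x) = x - s (q.mkQ x) := by
      intro x
      show P.φ (e.symm (LinearMap.codRestrict q r hrmem x)) = x - s (q.mkQ x)
      have : P.φ (e.symm (LinearMap.codRestrict q r hrmem x))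
          = ↑(e (e.symm (LinearMap.codRestrict q r hrmem x))) := rfl
      rw [this, e.apply_symm_apply]
      rfl
    have key2 : ∀ t, ψ (P.φ t) = t := by
      intro t
      apply hinj
      rw [key1]
      have : q.mkQ (P.φ t) = 0 := (Submodule.Quotient.mk_eq_zero q).mpr ⟨t, rfl⟩
      rw [this, map_zero, sub_zero]
    -- lift "h.f ∘ s" on the cokernel along `u.f`
    obtain ⟨f'', hf''⟩ := Module.projective_lifting_property u.f (h.f ∘ₗ s) surjf
    -- assemble the lift
    let f' : P.X →ₗ[A] T₁.X := (T₁.φ ∘ₗ γ) ∘ₗ ψ + f'' ∘ₗ q.mkQ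
    have big : u.f ∘ₗ (T₁.φ ∘ₗ γ) = h.f ∘ₗ P.φ := by
      apply td_ext P.td
      intro m y
      simp only [LinearMap.comp_apply]
      have hgy : u.g (g' y) = h.g y := LinearMap.congr_fun hg' y
      calc u.f (T₁.φ (γ (P.td.τ m y)))
          = u.f (T₁.φ (T₁.td.τ m (g' y))) := by
            exact congrArg (fun t => u.f (T₁.φ t)) (tmap_τ P.td T₁.td g' m y)
        _ = T₂.φ (T₂.td.τ m (u.g (g' y))) := u.comm m (g' y)
        _ = T₂.φ (T₂.td.τ m (h.g y)) := by rw [hgy]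
        _ = h.f (P.φ (P.td.τ m y)) := (h.comm m y).symm
    refine ⟨{ f := f', g := g', comm := ?_ }, ?_, fun y => LinearMap.congr_fun hg' y⟩
    · intro m y
      show (T₁.φ ∘ₗ γ) (ψ (P.φ (P.td.τ m y))) + f'' (q.mkQ (P.φ (P.td.τ m y)))
        = T₁.φ (T₁.td.τ m (g' y))
      have hz : q.mkQ (P.φ (P.td.τ m y)) = 0 :=
        (Submodule.Quotient.mk_eq_zero q).mpr ⟨P.td.τ m y, rfl⟩
      rw [key2, hz, map_zero, add_zero]
      exact congrArg (fun t => T₁.φ t) (tmap_τ P.td T₁.td g' m y)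
    · intro x
      show u.f ((T₁.φ ∘ₗ γ) (ψ x) + f'' (q.mkQ x)) = h.f x
      rw [map_add]
      have h1 : u.f ((T₁.φ ∘ₗ γ) (ψ x)) = h.f (P.φ (ψ x)) :=
        LinearMap.congr_fun big (ψ x)
      have h2 : u.f (f'' (q.mkQ x)) = h.f (s (q.mkQ x)) :=
        LinearMap.congr_fun hf'' (q.mkQ x)
      rw [h1, h2, key1, map_sub]
      abel
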